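/- Let k ≥ 1, n ≥ 1 and let n output nodes be generated i.i.d. as above. Then the probability that a fixed input node is isolated (not connected to any output node) equals (1 - d̄/k)^n, and if this probability is required to be at most k^{-u} for some u > 0, then necessarily n·d̄ ≥ c·k·log k for a positive constant c depending only on u (e.g. c = u/(1 + u·log 3/3) works for k ≥ 3 and n ≥ k). -/

import Mathlib

/-- The probability that a fixed input node is isolated among `n` i.i.d. output nodes equals
    `(1 - d̄/k)^n`, and if this probability is at most `k^{-u}` then
    `n·d̄ ≥ c·k·log k` with `c = u/(1 + u log 3 / 3)` (for `k ≥ 3`, `n ≥ k`). -/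
theorem isolation_probability_bound (k n : ℕ) (Ω : ℕ → ℝ) (u : ℝ)
    (hk : 3 ≤ k) (hn : k ≤ n) (hu : 0 < u)
    (hΩ : ∀ d, 0 ≤ Ω d) (hsum : ∑ d ∈ Finset.range (k + 1), Ω d = 1)
    (dbar : ℝ) (hdbar : dbar = ∑ d ∈ Finset.range (k + 1), (d : ℝ) * Ω d)
    (hdbark : dbar ≤ k) :
    (∑ d ∈ Finset.range (k + 1), Ω d * (1 - (d : ℝ) / k)) ^ n = (1 - dbar / k) ^ n ∧
    ((1 - dbar / k) ^ n ≤ (k : ℝ) ^ (-u) →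
      (n : ℝ) * dbar ≥ (u / (1 + u * Real.log 3 / 3)) * k * Real.log k) := by
  have hk3 : (3 : ℝ) ≤ (k : ℝ) := by exact_mod_cast hk
  have hkpos : (0 : ℝ) < k := by linarith
  have hk0 : (k : ℝ) ≠ 0 := ne_of_gt hkpos
  have hnk : (k : ℝ) ≤ (n : ℝ) := by exact_mod_cast hn
  have hnpos : (0 : ℝ) < n := lt_of_lt_of_le hkpos hnk
  -- log 3 ≥ 1
  have hlog3 : (1 : ℝ) ≤ Real.log 3 := by
    rw [Real.le_log_iff_exp_le (by norm_num)]
    have := Real.exp_one_lt_d9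
    linarith
  set L : ℝ := Real.log 3 / 3 with hL
  have hLpos : 0 < L := by positivity
  -- log k ≤ L * k
  have hlogk : Real.log k ≤ L * k := by
    have h1 : Real.log ((k : ℝ) / 3) ≤ (k : ℝ) / 3 - 1 :=
      Real.log_le_sub_one_of_pos (by positivity)
    have h2 : Real.log ((k : ℝ) / 3) = Real.log k - Real.log 3 :=
      Real.log_div hk0 (by norm_num)
    rw [h2] at h1
    nlinarith [hlog3, hk3]
  have hlogknn : 0 ≤ Real.log k := Real.log_nonneg (by linarith)
  have hdnn : 0 ≤ dbar := by
    rw [hdbar]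
    exact Finset.sum_nonneg fun d _ => mul_nonneg (Nat.cast_nonneg d) (hΩ d)
  have hc1 : 0 < 1 + u * L := by positivity
  constructor
  · congr 1
    have hterm : ∀ d ∈ Finset.range (k + 1), Ω d * (1 - (d : ℝ) / k)
        = Ω d - (d : ℝ) * Ω d / k := by
      intro d _
      field_simp
    rw [Finset.sum_congr rfl hterm, Finset.sum_sub_distrib, hsum, hdbar, Finset.sum_div]
  · intro h
    rcases lt_or_eq_of_le hdbark with hlt | heq
    · set x : ℝ := dbar / k with hx
      have hx0 : 0 ≤ x := div_nonneg hdnn (le_of_lt hkpos)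
      have hx1 : x < 1 := (div_lt_one hkpos).mpr hlt
      have h1x : 0 < 1 - x := by linarith
      -- take logs
      have hlog : (n : ℝ) * Real.log (1 - x) ≤ -u * Real.log k := by
        have := Real.log_le_log (pow_pos h1x n) h
        rwa [Real.log_pow, Real.log_rpow hkpos] at this
      have hneg : -Real.log (1 - x) ≤ x / (1 - x) := by
        have h1 : Real.log (1 - x)⁻¹ ≤ (1 - x)⁻¹ - 1 :=
          Real.log_le_sub_one_of_pos (by positivity)
        rw [Real.log_inv] at h1
        have : (1 - x)⁻¹ - 1 = x / (1 - x) := by field_simp; ring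
        linarith [this ▸ h1]
      -- u log k * (1-x) ≤ n x
      have key : u * Real.log k * (1 - x) ≤ (n : ℝ) * x := by
        have h2 : u * Real.log k ≤ (n : ℝ) * (x / (1 - x)) := by
          have := mul_le_mul_of_nonneg_left hneg (le_of_lt hnpos)
          nlinarith [hlog]
        have := mul_le_mul_of_nonneg_right h2 (le_of_lt h1x)
        calc u * Real.log k * (1 - x) ≤ (n : ℝ) * (x / (1 - x)) * (1 - x) := this
          _ = (n : ℝ) * x := by field_simp
      -- log k ≤ L n
      have hlogn : Real.log k ≤ L * n := le_trans hlogk (by nlinarith)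
      have hmain : (u / (1 + u * L)) * Real.log k ≤ (n : ℝ) * x := by
        rw [div_mul_eq_mul_div, div_le_iff₀ hc1]
        have : u * x * Real.log k ≤ u * x * (L * n) :=
          mul_le_mul_of_nonneg_left hlogn (by positivity)
        nlinarith [key]
      have hdx : dbar = x * k := by rw [hx]; field_simp
      rw [ge_iff_le, hdx]
      have := mul_le_mul_of_nonneg_right hmain (le_of_lt hkpos)
      calc u / (1 + u * Real.log 3 / 3) * k * Real.log k
          = (u / (1 + u * L)) * Real.log k * k := by rw [hL]; ring
        _ ≤ (n : ℝ) * x * k := this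
        _ = (n : ℝ) * (x * k) := by ring
    · -- dbar = k
      have hcL : (u / (1 + u * L)) * L ≤ 1 := by
        rw [div_mul_eq_mul_div, div_le_one hc1]; nlinarith
      have h1 : (u / (1 + u * L)) * Real.log k ≤ (n : ℝ) := by
        have h2 : (u / (1 + u * L)) * Real.log k ≤ (u / (1 + u * L)) * (L * n) := by
          apply mul_le_mul_of_nonneg_left _ (by positivity)
          exact le_trans hlogk (by nlinarith)
        rw [← mul_assoc] at h2
        calc (u / (1 + u * L)) * Real.log k ≤ (u / (1 + u * L)) * L * n := h2
          _ ≤ 1 * n := mul_le_mul_of_nonneg_right hcL (le_of_lt hnpos)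
          _ = n := one_mul _
      rw [ge_iff_le, heq]
      calc u / (1 + u * Real.log 3 / 3) * k * Real.log k
          = ((u / (1 + u * L)) * Real.log k) * k := by rw [hL]; ring
        _ ≤ (n : ℝ) * k := mul_le_mul_of_nonneg_right h1 (le_of_lt hkpos)
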